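/- Let L ∈ T with root system R. Then for every β ∈ R and every non-isotropic α ∈ R, -4 ≤ 2(β,α)/(α,α) ≤ 4. -/

import Mathlib

open scoped Classical

namespace Gen

variable (F L : Type*) [Field F] [CharZero F] [LieRing L] [LieAlgebra F L]

/-- The weight space of a linear functional `α` on a subalgebra `H`. -/
def wt (H : LieSubalgebra F L) (α : Module.Dual F H) : Submodule F L where
  carrier := {x : L | ∀ h : H, ⁅(h : L), x⁆ = α h • x}
  add_mem' := by
    intro a b ha hb h
    rw [lie_add, ha h, hb h, smul_add]
  zero_mem' := by intro h; simp
  smul_mem' := by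
    intro c x hx h
    rw [lie_smul, hx h, smul_comm]

/-- Data for axioms (T1) and (T2): a non-degenerate symmetric invariant bilinear form,
a finite dimensional split toral subalgebra `H` on which the form is non-degenerate,
together with the representatives `t_α ∈ H` of linear functionals on `H`. -/
structure TData where
  B : L →ₗ[F] L →ₗ[F] F
  bsymm : ∀ x y, B x y = B y x
  binv : ∀ x y z, B ⁅x, y⁆ z = B x ⁅y, z⁆
  bnondeg : ∀ x, (∀ y, B x y = 0) → x = 0
  H : LieSubalgebra F L
  hne : H ≠ ⊥
  hfin : FiniteDimensional F H
  hnondeg : ∀ h : H, (∀ h' : H, B h h' = 0) → h = 0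
  decomp : DirectSum.IsInternal (wt F L H)
  t : Module.Dual F H → H
  tspec : ∀ (α : Module.Dual F H) (h : H), B (t α) h = α h

variable {F L}

namespace TData

variable (T : TData F L)

/-- The form transferred to the dual of `H`: `(α, β) = (t_α, t_β)`. -/
def pr (α β : Module.Dual F T.H) : F := T.B (T.t α) (T.t β)

/-- The root system `R = {α : L_α ≠ 0}`. -/
def R : Set (Module.Dual F T.H) := {α | wt F L T.H α ≠ ⊥}

/-- Non-isotropic roots. -/
def Rx : Set (Module.Dual F T.H) := {α | α ∈ T.R ∧ T.pr α α ≠ 0}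

/-- Isotropic roots. -/
def R0 : Set (Module.Dual F T.H) := {α | α ∈ T.R ∧ T.pr α α = 0}

/-- The core: the subalgebra generated by the non-isotropic root spaces. -/
def core : LieSubalgebra F L :=
  LieSubalgebra.lieSpan F L (⋃ α ∈ T.Rx, (wt F L T.H α : Set L))

end TData

variable (F L)

/-- A Lie algebra in the class 𝒯: axioms (T1)–(T6). -/
structure TAlg extends TData F L where
  t3a : ∀ δ ∈ toTData.R0, ∃ x ∈ wt F L toTData.H δ, ∃ y ∈ wt F L toTData.H (-δ),
          ⁅x, y⁆ = (toTData.t δ : L)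
  t3b : ∀ α ∈ toTData.Rx, ∀ x ∈ wt F L toTData.H α, x ≠ 0 →
          ∃ y ∈ wt F L toTData.H (-α), ⁅x, y⁆ = (toTData.t α : L)
  t4 : ∀ α ∈ toTData.Rx, ∀ x ∈ wt F L toTData.H α, ∀ y : L,
          ∃ n : ℕ, ((LieAlgebra.ad F L x) ^ n) y = 0
  t5a : ∀ S1 S2 : Set (Module.Dual F toTData.H), S1.Nonempty → S2.Nonempty →
          S1 ∪ S2 = toTData.Rx → Disjoint S1 S2 →
          ∃ a ∈ S1, ∃ b ∈ S2, toTData.pr a b ≠ 0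
  t5b : ∀ δ ∈ toTData.R0, ∃ α ∈ toTData.Rx, α + δ ∈ toTData.R
  t6free : Module.Free ℤ (AddSubgroup.closure toTData.R0)
  t6fin : Module.Finite ℤ (AddSubgroup.closure toTData.R0)

section Aux
set_option linter.unusedSectionVars false

variable {F L : Type*} [Field F] [CharZero F] [LieRing L] [LieAlgebra F L]

namespace TData

variable (T : TData F L)

lemma mem_wt {α : Module.Dual F T.H} {x : L} :
    x ∈ wt F L T.H α ↔ ∀ h : T.H, ⁅(h : L), x⁆ = α h • x := Iff.rfl

lemma pr_eq (x y : Module.Dual F T.H) : T.pr x y = x (T.t y) := T.tspec x (T.t y)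

lemma pr_symm (x y : Module.Dual F T.H) : T.pr x y = T.pr y x := T.bsymm _ _

lemma pr_add_left (x y z : Module.Dual F T.H) :
    T.pr (x + y) z = T.pr x z + T.pr y z := by simp [pr_eq]

lemma pr_sub_left (x y z : Module.Dual F T.H) :
    T.pr (x - y) z = T.pr x z - T.pr y z := by simp [pr_eq]

lemma pr_neg_left (x z : Module.Dual F T.H) : T.pr (-x) z = - T.pr x z := by simp [pr_eq]

lemma pr_smul_left (c : F) (x z : Module.Dual F T.H) :
    T.pr (c • x) z = c * T.pr x z := by simp [pr_eq]

lemma pr_add_right (x y z : Module.Dual F T.H) :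
    T.pr z (x + y) = T.pr z x + T.pr z y := by
  rw [T.pr_symm z (x + y), pr_add_left, T.pr_symm x z, T.pr_symm y z]

lemma pr_sub_right (x y z : Module.Dual F T.H) :
    T.pr z (x - y) = T.pr z x - T.pr z y := by
  rw [T.pr_symm z (x - y), pr_sub_left, T.pr_symm x z, T.pr_symm y z]

lemma pr_neg_right (x z : Module.Dual F T.H) : T.pr z (-x) = - T.pr z x := by
  rw [T.pr_symm z (-x), pr_neg_left, T.pr_symm x z]

lemma pr_smul_right (c : F) (x z : Module.Dual F T.H) :
    T.pr z (c • x) = c * T.pr z x := by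
  rw [T.pr_symm z (c • x), pr_smul_left, T.pr_symm x z]

lemma t_neg (α : Module.Dual F T.H) : T.t (-α) = - T.t α := by
  have h0 : T.t (-α) + T.t α = 0 := by
    apply T.hnondeg
    intro h'
    have h1 : T.B ((T.t (-α) : L) + (T.t α : L)) h' = T.B (T.t (-α)) h' + T.B (T.t α) h' := by
      simp
    have h2 : ((T.t (-α) + T.t α : T.H) : L) = (T.t (-α) : L) + (T.t α : L) := rfl
    rw [h2, h1, T.tspec, T.tspec]
    simp
  exact eq_neg_of_add_eq_zero_left h0

lemma wt_lie {α γ : Module.Dual F T.H} {x z : L} (hx : x ∈ wt F L T.H α)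
    (hz : z ∈ wt F L T.H γ) : ⁅x, z⁆ ∈ wt F L T.H (α + γ) := by
  intro h
  rw [leibniz_lie, hx h, hz h, smul_lie, lie_smul]
  simp [add_smul]

end TData

end Aux

namespace TAlg

variable {F L : Type*} [Field F] [CharZero F] [LieRing L] [LieAlgebra F L] (T : TAlg F L)

lemma t_ne_zero {α : Module.Dual F T.toTData.H} (ha : T.toTData.pr α α ≠ 0) :
    (T.toTData.t α : L) ≠ 0 := by
  intro h
  apply ha
  have : T.toTData.pr α α = T.toTData.B (T.toTData.t α : L) (T.toTData.t α : L) := rfl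
  rw [this, h]
  simp

lemma neg_mem_Rx {α : Module.Dual F T.toTData.H} (hα : α ∈ T.toTData.Rx) :
    -α ∈ T.toTData.Rx := by
  obtain ⟨hαR, ha⟩ := hα
  obtain ⟨x, hx, hx0⟩ := Submodule.exists_mem_ne_zero_of_ne_bot hαR
  obtain ⟨y, hy, hxy⟩ := T.t3b α ⟨hαR, ha⟩ x hx hx0
  have htne : (T.toTData.t α : L) ≠ 0 := T.t_ne_zero ha
  have hy0 : y ≠ 0 := by rintro rfl; rw [lie_zero] at hxy; exact htne hxy.symm
  refine ⟨(Submodule.ne_bot_iff _).mpr ⟨y, hy, hy0⟩, ?_⟩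
  rw [T.toTData.pr_neg_left, T.toTData.pr_neg_right, neg_neg]
  exact ha

lemma key {β α : Module.Dual F T.toTData.H} (hβ : β ∈ T.toTData.R) (hα : α ∈ T.toTData.Rx) :
    ∃ k : ℤ, 2 * T.toTData.pr β α = (k : F) * T.toTData.pr α α ∧
      ∀ j : ℕ, (j : ℤ) ≤ k → β - (j : F) • α ∈ T.toTData.R := by
  obtain ⟨hαR, ha⟩ := hα
  obtain ⟨x, hx, hx0⟩ := Submodule.exists_mem_ne_zero_of_ne_bot hαR
  obtain ⟨y, hy, hxy⟩ := T.t3b α ⟨hαR, ha⟩ x hx hx0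
  have htne : (T.toTData.t α : L) ≠ 0 := T.t_ne_zero ha
  have hy0 : y ≠ 0 := by rintro rfl; rw [lie_zero] at hxy; exact htne hxy.symm
  have hnegR : wt F L T.toTData.H (-α) ≠ ⊥ := (Submodule.ne_bot_iff _).mpr ⟨y, hy, hy0⟩
  have hprneg : T.toTData.pr (-α) (-α) = T.toTData.pr α α := by
    rw [T.toTData.pr_eq, T.toTData.t_neg]
    simp [← T.toTData.pr_eq]
  set a := T.toTData.pr α α with haa
  set c : F := 2 * a⁻¹ with hcc
  have hc0 : c ≠ 0 := by
    rw [hcc]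
    exact mul_ne_zero (by norm_num) (inv_ne_zero ha)
  set h : L := c • (T.toTData.t α : L) with hh
  set f : L := c • y with hf
  have hadx : ⁅(T.toTData.t α : L), x⁆ = a • x := by
    rw [hx (T.toTData.t α), ← T.toTData.pr_eq]
  have hady : ⁅(T.toTData.t α : L), y⁆ = (-a) • y := by
    rw [hy (T.toTData.t α)]
    have : (-α) (T.toTData.t α) = -a := by
      rw [haa, T.toTData.pr_eq]; simp
    rw [this]
  have trip : IsSl2Triple h x f := by
    refine ⟨?_, ?_, ?_, ?_⟩
    · exact smul_ne_zero hc0 htne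
    · rw [hf, lie_smul, hxy, hh]
    · rw [hh, smul_lie, hadx, smul_smul]
      have : c * a = 2 := by rw [hcc, mul_assoc, inv_mul_cancel₀ ha, mul_one]
      rw [this, two_smul, two_nsmul]
    · rw [hh, hf, smul_lie, lie_smul, hady]
      match_scalars
      have hca : c * a = 2 := by rw [hcc, mul_assoc, inv_mul_cancel₀ ha, mul_one]
      field_simp [hcc]
      linear_combination (-1 : F) * hca
  obtain ⟨v, hv, hv0⟩ := Submodule.exists_mem_ne_zero_of_ne_bot hβ
  have hmemx : ∀ i : ℕ, ((LieModule.toEnd F L L x) ^ i) v ∈ wt F L T.toTData.H (β + (i : F) • α) := by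
    intro i
    induction i with
    | zero => simpa using hv
    | succ i ih =>
      have hmem := T.toTData.wt_lie hx ih
      have heq : α + (β + (i : F) • α) = β + (((i + 1 : ℕ) : F)) • α := by
        push_cast; module
      rw [pow_succ', Module.End.mul_apply, LieModule.toEnd_apply_apply, ← heq]
      exact hmem
  obtain ⟨N0, hN0⟩ := T.t4 α ⟨hαR, ha⟩ x hx v
  have hex : ∃ n, ((LieModule.toEnd F L L x) ^ n) v = 0 := ⟨N0, hN0⟩
  obtain ⟨m, hm1, hm2⟩ := Nat.exists_not_and_succ_of_not_zero_of_exists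
    (p := fun n => ((LieModule.toEnd F L L x) ^ n) v = 0) (by simpa using hv0) hex
  set w := ((LieModule.toEnd F L L x) ^ m) v with hw
  have hw0 : w ≠ 0 := hm1
  have hwmem : w ∈ wt F L T.toTData.H (β + (m : F) • α) := hmemx m
  set μ : F := c * (T.toTData.pr β α + m * a) with hμ
  have hliehw : ⁅h, w⁆ = μ • w := by
    have h1 : ⁅(T.toTData.t α : L), w⁆ = (T.toTData.pr β α + m * a) • w := by
      have h2 := hwmem (T.toTData.t α)
      have h3 : (β + (m : F) • α) (T.toTData.t α) = T.toTData.pr β α + m * a := by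
        simp [T.toTData.pr_eq, haa]
        try ring
      rw [h3] at h2
      exact h2
    rw [hh, smul_lie, h1, smul_smul, hμ]
  have P : trip.HasPrimitiveVectorWith w μ := by
    refine ⟨hw0, hliehw, ?_⟩
    show ⁅x, w⁆ = 0
    rw [← LieModule.toEnd_apply_apply F L L, hw, ← Module.End.mul_apply, ← pow_succ']
    exact hm2
  have hnegRx : (-α) ∈ T.toTData.Rx := ⟨hnegR, by rw [hprneg]; exact ha⟩
  obtain ⟨n1, hn1⟩ := T.t4 (-α) hnegRx y hy w
  have hfn : ∃ n, ((LieModule.toEnd F L L f) ^ n) w = 0 := by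
    refine ⟨n1, ?_⟩
    have hfe : LieModule.toEnd F L L f = c • LieModule.toEnd F L L y := by
      rw [hf]; exact map_smul (LieModule.toEnd F L L) c y
    rw [hfe, smul_pow, LinearMap.smul_apply]
    have : ((LieModule.toEnd F L L y) ^ n1) w = 0 := hn1
    rw [this, smul_zero]
  obtain ⟨n, hnn1, hnn2⟩ := Nat.exists_not_and_succ_of_not_zero_of_exists
    (p := fun i => ((LieModule.toEnd F L L f) ^ i) w = 0) (by simpa using hw0) hfn
  have hmun : μ = n := by
    have h2 := P.lie_e_pow_succ_toEnd_f n
    rw [hnn2, lie_zero] at h2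
    have h3 := (smul_eq_zero.mp h2.symm).resolve_right hnn1
    have h4 : ((n : F) + 1) ≠ 0 := by
      have := Nat.cast_add_one_ne_zero (R := F) n
      exact_mod_cast this
    have h5 : μ - (n : F) = 0 := by
      rcases mul_eq_zero.mp h3 with hcase | hcase
      · exact absurd hcase h4
      · exact hcase
    exact sub_eq_zero.mp h5
  have ha' : a ≠ 0 := ha
  refine ⟨(n : ℤ) - 2 * m, ?_, ?_⟩
  · have h6 : c * (T.toTData.pr β α + m * a) = n := hmun
    rw [hcc] at h6
    have h7 : 2 * (T.toTData.pr β α + (m : F) * a) = (n : F) * a := by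
      rw [← h6]
      field_simp
      try ring
    push_cast
    linear_combination h7
  · intro j hj
    have hin : m + j ≤ n := by omega
    have hpsne := P.pow_toEnd_f_ne_zero_of_eq_nat hmun hin
    have hfw : f ∈ wt F L T.toTData.H (-α) := Submodule.smul_mem _ c hy
    have hmemf : ∀ i : ℕ,
        ((LieModule.toEnd F L L f) ^ i) w ∈ wt F L T.toTData.H (β + ((m : F) - i) • α) := by
      intro i
      induction i with
      | zero => simpa using hwmem
      | succ i ih =>
        have hmem := T.toTData.wt_lie hfw ih
        have heq : -α + (β + ((m : F) - i) • α) = β + ((m : F) - ((i + 1 : ℕ) : F)) • α := by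
          push_cast; module
        rw [pow_succ', Module.End.mul_apply, LieModule.toEnd_apply_apply, ← heq]
        exact hmem
    have hmm := hmemf (m + j)
    have heq2 : β + ((m : F) - ((m + j : ℕ) : F)) • α = β - (j : F) • α := by
      push_cast; module
    rw [heq2] at hmm
    exact (Submodule.ne_bot_iff _).mpr ⟨_, hmm, hpsne⟩

private lemma intlem (k q s s2 : ℤ) (h5 : 5 ≤ k) (hq0 : q ≠ 0)
    (e1 : q * (k - 2) = s * (k + q * (1 - k)))
    (e2 : q * (k - 4) = s2 * (k + q * (4 - 2 * k))) : q = 1 := by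
  rcases lt_or_ge q 0 with hqneg | hqpos
  · exfalso
    have hD1 : 1 ≤ k + q * (1 - k) := by nlinarith
    have hsneg : s ≤ -1 := by nlinarith
    nlinarith [mul_le_mul_of_nonneg_right hsneg (by linarith : (0:ℤ) ≤ k + q * (1 - k))]
  · have hq1 : 1 ≤ q := by omega
    by_contra hne
    have hq2 : 2 ≤ q := by omega
    have hD1 : k + q * (1 - k) ≤ 2 - k := by nlinarith
    have hsneg : s ≤ -1 := by nlinarith
    have hqk : q = k ∨ q = 2 := by
      rcases lt_or_ge s (-1) with hs2 | hs1
      · right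
        nlinarith [mul_le_mul_of_nonpos_right (by omega : s ≤ -2)
          (by linarith : k + q * (1 - k) ≤ 0)]
      · left
        have hs : s = -1 := by omega
        rw [hs] at e1
        nlinarith
    rcases hqk with hqe | hqe
    · have h' : k * (k - 4) = k * (s2 * (5 - 2 * k)) := by
        rw [hqe] at e2
        linear_combination e2
      have hcancel : k - 4 = s2 * (5 - 2 * k) :=
        mul_left_cancel₀ (by omega : k ≠ 0) h'
      rcases lt_or_ge s2 0 with hs2a | hs2a
      · nlinarith
      · nlinarith
    · rw [hqe] at e2
      rcases lt_or_ge s2 0 with hs2a | hs2a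
      · nlinarith
      · nlinarith

lemma no5 {β α : Module.Dual F T.toTData.H} (hβ : β ∈ T.toTData.R) (hα : α ∈ T.toTData.Rx)
    (k : ℤ) (hk : 2 * T.toTData.pr β α = (k : F) * T.toTData.pr α α)
    (hstr : ∀ j : ℕ, (j : ℤ) ≤ k → β - (j : F) • α ∈ T.toTData.R)
    (h5 : 5 ≤ k) : False := by
  have ha : T.toTData.pr α α ≠ 0 := hα.2
  have hsymm : T.toTData.pr α β = T.toTData.pr β α := T.toTData.pr_symm α β
  have casteq : ∀ A B : ℤ, (A : F) * T.toTData.pr α α = (B : F) * T.toTData.pr α α → A = B := by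
    intro A B hAB
    have := mul_right_cancel₀ ha hAB
    exact_mod_cast this
  have hγ1 : β - ((1:ℕ):F) • α ∈ T.toTData.R := hstr 1 (by omega)
  have hγ2 : β - ((2:ℕ):F) • α ∈ T.toTData.R := hstr 2 (by omega)
  have hγ5 : β - ((5:ℕ):F) • α ∈ T.toTData.R := hstr 5 (by omega)
  have hg1 : T.toTData.pr (β - ((1:ℕ):F) • α) (β - ((1:ℕ):F) • α)
      = T.toTData.pr β β - 2 * T.toTData.pr β α + T.toTData.pr α α := by
    simp only [TData.pr_sub_left, TData.pr_sub_right, TData.pr_add_left, TData.pr_add_right, TData.pr_neg_left, TData.pr_neg_right, TData.pr_smul_left, TData.pr_smul_right, hsymm]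
    push_cast
    ring
  have hg2 : T.toTData.pr (β - ((2:ℕ):F) • α) (β - ((2:ℕ):F) • α)
      = T.toTData.pr β β - 4 * T.toTData.pr β α + 4 * T.toTData.pr α α := by
    simp only [TData.pr_sub_left, TData.pr_sub_right, TData.pr_add_left, TData.pr_add_right, TData.pr_neg_left, TData.pr_neg_right, TData.pr_smul_left, TData.pr_smul_right, hsymm]
    push_cast
    ring
  by_cases hb : T.toTData.pr β β = 0
  · -- isotropic β
    have hne : ((1 - k : ℤ) : F) ≠ 0 := Int.cast_ne_zero.mpr (by omega)
    have hD1 : T.toTData.pr (β - ((1:ℕ):F) • α) (β - ((1:ℕ):F) • α) = ((1 - k : ℤ) : F) * T.toTData.pr α α := by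
      rw [hg1]
      push_cast
      linear_combination hb - hk
    have hγ1x : β - ((1:ℕ):F) • α ∈ T.toTData.Rx :=
      ⟨hγ1, by rw [hD1]; exact mul_ne_zero hne ha⟩
    obtain ⟨u, hu, -⟩ := T.key hβ hγ1x
    have hbg1 : T.toTData.pr β (β - ((1:ℕ):F) • α) = T.toTData.pr β β - T.toTData.pr β α := by
      simp only [TData.pr_sub_left, TData.pr_sub_right, TData.pr_add_left, TData.pr_add_right, TData.pr_neg_left, TData.pr_neg_right, TData.pr_smul_left, TData.pr_smul_right, hsymm]
      push_cast
      ring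
    rw [hbg1, hD1] at hu
    have hcast : ((-k : ℤ) : F) * T.toTData.pr α α = ((u * (1 - k) : ℤ) : F) * T.toTData.pr α α := by
      push_cast at hu ⊢
      linear_combination hu - 2 * hb + hk
    have hint : -k = u * (1 - k) := casteq _ _ hcast
    have hmul : (u - 1) * (k - 1) = 1 := by linear_combination hint
    rcases Int.mul_eq_one_iff_eq_one_or_neg_one.mp hmul with ⟨h1, h2⟩ | ⟨h1, h2⟩ <;> omega
  · -- non-isotropic β
    have hβx : β ∈ T.toTData.Rx := ⟨hβ, hb⟩
    obtain ⟨q, hq, hstrq⟩ := T.key hα.1 hβx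
    rw [hsymm] at hq
    have hq0 : q ≠ 0 := by
      intro h0
      have h1 : (k : F) * T.toTData.pr α α = ((0:ℤ) : F) * T.toTData.pr α α := by
        rw [h0] at hq
        push_cast at hq ⊢
        linear_combination hq - hk
      have := casteq k 0 (by exact_mod_cast h1)
      omega
    have hqg1 : (q : F) * T.toTData.pr (β - ((1:ℕ):F) • α) (β - ((1:ℕ):F) • α)
        = ((k + q * (1 - k) : ℤ) : F) * T.toTData.pr α α := by
      rw [hg1]
      push_cast
      linear_combination (-1 : F) * hq + (1 - (q : F)) * hk
    have hD1ne : (k + q * (1 - k)) ≠ 0 := by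
      intro h0
      have hmul : (q - 1) * (k - 1) = 1 := by linear_combination (-1 : ℤ) * h0
      rcases Int.mul_eq_one_iff_eq_one_or_neg_one.mp hmul with ⟨h1, h2⟩ | ⟨h1, h2⟩ <;> omega
    have hγ1ne : T.toTData.pr (β - ((1:ℕ):F) • α) (β - ((1:ℕ):F) • α) ≠ 0 := by
      intro h0
      apply hD1ne
      apply casteq _ 0
      rw [← hqg1, h0]
      simp
    have hγ1x : β - ((1:ℕ):F) • α ∈ T.toTData.Rx := ⟨hγ1, hγ1ne⟩
    obtain ⟨s, hs, -⟩ := T.key hα.1 hγ1x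
    have hag1 : T.toTData.pr α (β - ((1:ℕ):F) • α) = T.toTData.pr β α - T.toTData.pr α α := by
      simp only [TData.pr_sub_left, TData.pr_sub_right, TData.pr_add_left, TData.pr_add_right, TData.pr_neg_left, TData.pr_neg_right, TData.pr_smul_left, TData.pr_smul_right, hsymm]
      push_cast
      ring
    rw [hag1] at hs
    have e1F : ((q * (k - 2) : ℤ) : F) * T.toTData.pr α α = ((s * (k + q * (1 - k)) : ℤ) : F) * T.toTData.pr α α := by
      have hqg1c := hqg1
      push_cast at hqg1c hs ⊢
      linear_combination (-(q : F)) * hk + (q : F) * hs + (s : F) * hqg1c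
    have e1 : q * (k - 2) = s * (k + q * (1 - k)) := casteq _ _ e1F
    have hqg2 : (q : F) * T.toTData.pr (β - ((2:ℕ):F) • α) (β - ((2:ℕ):F) • α)
        = ((k + q * (4 - 2 * k) : ℤ) : F) * T.toTData.pr α α := by
      rw [hg2]
      push_cast
      linear_combination (-1 : F) * hq + (1 - 2 * (q : F)) * hk
    have hD2ne : (k + q * (4 - 2 * k)) ≠ 0 := by
      intro h0
      rcases lt_or_ge q 0 with hq1 | hq1
      · nlinarith
      · have : 1 ≤ q := by omega
        nlinarith
    have hγ2ne : T.toTData.pr (β - ((2:ℕ):F) • α) (β - ((2:ℕ):F) • α) ≠ 0 := by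
      intro h0
      apply hD2ne
      apply casteq _ 0
      rw [← hqg2, h0]
      simp
    have hγ2x : β - ((2:ℕ):F) • α ∈ T.toTData.Rx := ⟨hγ2, hγ2ne⟩
    obtain ⟨s2, hs2, -⟩ := T.key hα.1 hγ2x
    have hag2 : T.toTData.pr α (β - ((2:ℕ):F) • α) = T.toTData.pr β α - 2 * T.toTData.pr α α := by
      simp only [TData.pr_sub_left, TData.pr_sub_right, TData.pr_add_left, TData.pr_add_right, TData.pr_neg_left, TData.pr_neg_right, TData.pr_smul_left, TData.pr_smul_right, hsymm]
      push_cast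
      ring
    rw [hag2] at hs2
    have e2F : ((q * (k - 4) : ℤ) : F) * T.toTData.pr α α
        = ((s2 * (k + q * (4 - 2 * k)) : ℤ) : F) * T.toTData.pr α α := by
      have hqg2c := hqg2
      push_cast at hqg2c hs2 ⊢
      linear_combination (-(q : F)) * hk + (q : F) * hs2 + (s2 : F) * hqg2c
    have e2 : q * (k - 4) = s2 * (k + q * (4 - 2 * k)) := casteq _ _ e2F
    have hq1 : q = 1 := intlem k q s s2 h5 hq0 e1 e2
    rw [hq1] at hq hstrq
    -- the chain for q = 1
    have hδ : α - ((1:ℕ):F) • β ∈ T.toTData.R := hstrq 1 (by norm_num)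
    have hδn : T.toTData.pr (α - ((1:ℕ):F) • β) (α - ((1:ℕ):F) • β) = T.toTData.pr α α := by
      simp only [TData.pr_sub_left, TData.pr_sub_right, TData.pr_add_left, TData.pr_add_right, TData.pr_neg_left, TData.pr_neg_right, TData.pr_smul_left, TData.pr_smul_right, hsymm]
      push_cast
      linear_combination -hq
    have hδx : α - ((1:ℕ):F) • β ∈ T.toTData.Rx := ⟨hδ, by rw [hδn]; exact ha⟩
    have hnδx := T.neg_mem_Rx hδx
    obtain ⟨m1, hm1, hstrm1⟩ := T.key hβ hnδx
    have hPβnδ : T.toTData.pr β (-(α - ((1:ℕ):F) • β)) = T.toTData.pr β β - T.toTData.pr β α := by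
      simp only [TData.pr_sub_left, TData.pr_sub_right, TData.pr_add_left, TData.pr_add_right, TData.pr_neg_left, TData.pr_neg_right, TData.pr_smul_left, TData.pr_smul_right, hsymm]
      push_cast
      ring
    have hPnδ : T.toTData.pr (-(α - ((1:ℕ):F) • β)) (-(α - ((1:ℕ):F) • β)) = T.toTData.pr α α := by
      rw [T.toTData.pr_neg_left, T.toTData.pr_neg_right, neg_neg]
      exact hδn
    rw [hPβnδ, hPnδ] at hm1
    have hm1k : ((k : ℤ) : F) * T.toTData.pr α α = ((m1 : ℤ) : F) * T.toTData.pr α α := by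
      push_cast at hm1 ⊢
      linear_combination hm1 + 2 * hq - hk
    have hm1eq : k = m1 := casteq _ _ hm1k
    have hε : β - ((2:ℕ):F) • (-(α - ((1:ℕ):F) • β)) ∈ T.toTData.R :=
      hstrm1 2 (by omega)
    have hεn : T.toTData.pr (β - ((2:ℕ):F) • (-(α - ((1:ℕ):F) • β)))
        (β - ((2:ℕ):F) • (-(α - ((1:ℕ):F) • β))) = ((4 - k : ℤ) : F) * T.toTData.pr α α := by
      simp only [TData.pr_sub_left, TData.pr_sub_right, TData.pr_add_left, TData.pr_add_right, TData.pr_neg_left, TData.pr_neg_right, TData.pr_smul_left, TData.pr_smul_right, hsymm]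
      push_cast
      linear_combination -hq - hk
    have hεx : β - ((2:ℕ):F) • (-(α - ((1:ℕ):F) • β)) ∈ T.toTData.Rx :=
      ⟨hε, by rw [hεn]; exact mul_ne_zero (Int.cast_ne_zero.mpr (by omega)) ha⟩
    have hnεx := T.neg_mem_Rx hεx
    obtain ⟨m2, hm2, hstrm2⟩ := T.key hγ5 hnεx
    have hPnε : T.toTData.pr (-(β - ((2:ℕ):F) • (-(α - ((1:ℕ):F) • β))))
        (-(β - ((2:ℕ):F) • (-(α - ((1:ℕ):F) • β)))) = ((4 - k : ℤ) : F) * T.toTData.pr α α := by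
      rw [T.toTData.pr_neg_left, T.toTData.pr_neg_right, neg_neg]
      exact hεn
    have hLHS : T.toTData.pr (β - ((5:ℕ):F) • α) (-(β - ((2:ℕ):F) • (-(α - ((1:ℕ):F) • β))))
        = T.toTData.pr β β - 7 * T.toTData.pr β α + 10 * T.toTData.pr α α := by
      simp only [TData.pr_sub_left, TData.pr_sub_right, TData.pr_add_left, TData.pr_add_right, TData.pr_neg_left, TData.pr_neg_right, TData.pr_smul_left, TData.pr_smul_right, hsymm]
      push_cast
      ring
    rw [hLHS, hPnε] at hm2
    have hm2cast : ((5 * (4 - k) : ℤ) : F) * T.toTData.pr α α = ((m2 * (4 - k) : ℤ) : F) * T.toTData.pr α α := by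
      push_cast at hm2 ⊢
      linear_combination hm2 + 2 * hq + 5 * hk
    have hm2int : 5 * (4 - k) = m2 * (4 - k) := casteq _ _ hm2cast
    have hm25 : (5 : ℤ) = m2 := mul_right_cancel₀ (by omega : (4 - k : ℤ) ≠ 0) hm2int
    have hν : (β - ((5:ℕ):F) • α) - ((2:ℕ):F) • (-(β - ((2:ℕ):F) • (-(α - ((1:ℕ):F) • β))))
        ∈ T.toTData.R := hstrm2 2 (by omega)
    have hνn : T.toTData.pr ((β - ((5:ℕ):F) • α) - ((2:ℕ):F) • (-(β - ((2:ℕ):F) • (-(α - ((1:ℕ):F) • β)))))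
        ((β - ((5:ℕ):F) • α) - ((2:ℕ):F) • (-(β - ((2:ℕ):F) • (-(α - ((1:ℕ):F) • β)))))
        = ((2 * k + 1 : ℤ) : F) * T.toTData.pr α α := by
      simp only [TData.pr_sub_left, TData.pr_sub_right, TData.pr_add_left, TData.pr_add_right, TData.pr_neg_left, TData.pr_neg_right, TData.pr_smul_left, TData.pr_smul_right, hsymm]
      push_cast
      linear_combination -hq + 2 * hk
    have hνx : (β - ((5:ℕ):F) • α) - ((2:ℕ):F) • (-(β - ((2:ℕ):F) • (-(α - ((1:ℕ):F) • β))))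
        ∈ T.toTData.Rx :=
      ⟨hν, by rw [hνn]; exact mul_ne_zero (Int.cast_ne_zero.mpr (by omega)) ha⟩
    obtain ⟨m3, hm3, -⟩ := T.key hα.1 hνx
    have hαν : T.toTData.pr α ((β - ((5:ℕ):F) • α) - ((2:ℕ):F) • (-(β - ((2:ℕ):F) • (-(α - ((1:ℕ):F) • β)))))
        = -T.toTData.pr β α - T.toTData.pr α α := by
      simp only [TData.pr_sub_left, TData.pr_sub_right, TData.pr_add_left, TData.pr_add_right, TData.pr_neg_left, TData.pr_neg_right, TData.pr_smul_left, TData.pr_smul_right, hsymm]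
      push_cast
      ring
    rw [hαν, hνn] at hm3
    have hm3cast : ((-(k + 2) : ℤ) : F) * T.toTData.pr α α = ((m3 * (2 * k + 1) : ℤ) : F) * T.toTData.pr α α := by
      push_cast at hm3 ⊢
      linear_combination hm3 + hk
    have hm3int : -(k + 2) = m3 * (2 * k + 1) := casteq _ _ hm3cast
    rcases lt_or_ge m3 0 with hm3a | hm3a
    · nlinarith
    · nlinarith

end TAlg

end Gen

/-- For `L ∈ 𝒯` (form normalized so `(α,α) = 1` for some non-isotropic
`α`), for all `β ∈ R` and non-isotropic `α ∈ R` the Cartan integer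
`2(β,α)/(α,α)` lies between `-4` and `4`. -/
theorem cartan_integer_bounded
    (F L : Type*) [Field F] [CharZero F] [LieRing L] [LieAlgebra F L]
    (T : Gen.TAlg F L)
    (hnorm : ∃ α ∈ T.toTData.Rx, T.toTData.pr α α = 1) :
    ∀ β ∈ T.toTData.R, ∀ α ∈ T.toTData.Rx,
      ∃ n : ℤ, 2 * T.toTData.pr β α = (n : F) * T.toTData.pr α α ∧ -4 ≤ n ∧ n ≤ 4 := by
  intro β hβ α hα
  obtain ⟨k, hk, hstr⟩ := T.key hβ hα
  rcases le_or_gt k 4 with hk4 | hk4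
  · rcases le_or_gt (-4) k with hk4a | hk4a
    · exact ⟨k, hk, hk4a, hk4⟩
    · exfalso
      have hnα := T.neg_mem_Rx hα
      obtain ⟨k2, hk2, hstr2⟩ := T.key hβ hnα
      have ha2 : T.toTData.pr (-α) (-α) ≠ 0 := hnα.2
      have hνeq : T.toTData.pr (-α) (-α) = T.toTData.pr α α := by
        rw [T.toTData.pr_neg_left, T.toTData.pr_neg_right, neg_neg]
      have hβν : T.toTData.pr β (-α) = -T.toTData.pr β α := T.toTData.pr_neg_right α β
      have hk2c := hk2
      rw [hβν, hνeq] at hk2c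
      have hcast : ((k2 : ℤ) : F) * T.toTData.pr α α = ((-k : ℤ) : F) * T.toTData.pr α α := by
        push_cast at hk2c ⊢
        linear_combination -hk2c - hk
      have hk2eq : k2 = -k := by
        have := mul_right_cancel₀ hα.2 hcast
        exact_mod_cast this
      exact T.no5 hβ hnα k2 hk2 hstr2 (by omega)
  · exfalso
    exact T.no5 hβ hα k hk hstr (by omega)
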